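/- Let b > 0, σ₁ > 0, σ₂ > 0, and u ∈ C¹([0,b], ℂ). Then ∫₀ᵇ |u'(t)|² dt + σ₁|u(0)|² + σ₂|u(b)|² ≥ (1/4)∫₀^{b/2} (t + 1/(2σ₁))⁻² |u(t)|² dt + (1/4)∫_{b/2}^{b} (b − t + 1/(2σ₂))⁻² |u(t)|² dt. -/

import Mathlib

open Set MeasureTheory intervalIntegral

lemma robin_key (a c : ℝ) (hac : a ≤ c) (u f : ℝ → ℂ) (w W : ℝ → ℝ)
    (hu : ContinuousOn u (Set.Icc a c)) (hf : ContinuousOn f (Set.Icc a c))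
    (hw : ContinuousOn w (Set.Icc a c)) (hW : ContinuousOn W (Set.Icc a c))
    (hud : ∀ t ∈ Set.Ioo a c, HasDerivAt u (f t) t)
    (hwd : ∀ t ∈ Set.Ioo a c, HasDerivAt w (W t) t) :
    (∫ t in a..c, ‖f t‖ ^ 2) ≥ w c * ‖u c‖ ^ 2 - w a * ‖u a‖ ^ 2
      - ∫ t in a..c, (W t + (w t) ^ 2) * ‖u t‖ ^ 2 := by
  set g : ℝ → ℝ := fun t => ‖u t‖ ^ 2 with hg_def
  have hnorm : ∀ z : ℂ, ‖z‖ ^ 2 = z.re ^ 2 + z.im ^ 2 := by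
    intro z
    rw [Complex.sq_norm, Complex.normSq_apply]; ring
  -- continuity facts
  have hure : ContinuousOn (fun t => (u t).re) (Icc a c) := Complex.continuous_re.comp_continuousOn hu
  have huim : ContinuousOn (fun t => (u t).im) (Icc a c) := Complex.continuous_im.comp_continuousOn hu
  have hfre : ContinuousOn (fun t => (f t).re) (Icc a c) := Complex.continuous_re.comp_continuousOn hf
  have hfim : ContinuousOn (fun t => (f t).im) (Icc a c) := Complex.continuous_im.comp_continuousOn hf
  have hgc : ContinuousOn g (Icc a c) := (hu.norm.pow 2)
  set G' : ℝ → ℝ := fun t => W t * g t + w t * (2 * ((u t).re * (f t).re + (u t).im * (f t).im)) with hG'_def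
  have hG'c : ContinuousOn G' (Icc a c) := by
    apply (hW.mul hgc).add
    exact hw.mul (continuousOn_const.mul ((hure.mul hfre).add (huim.mul hfim)))
  have hGd : ∀ t ∈ Ioo a c, HasDerivAt (fun t => w t * g t) (G' t) t := by
    intro t ht
    have hre : HasDerivAt (fun t => (u t).re) ((f t).re) t :=
      (Complex.reCLM.hasFDerivAt.comp_hasDerivAt t (hud t ht))
    have him : HasDerivAt (fun t => (u t).im) ((f t).im) t :=
      (Complex.imCLM.hasFDerivAt.comp_hasDerivAt t (hud t ht))
    have hg : HasDerivAt g (2 * ((u t).re * (f t).re + (u t).im * (f t).im)) t := by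
      have h1 : HasDerivAt (fun t => (u t).re ^ 2 + (u t).im ^ 2)
          (2 * (u t).re ^ 1 * (f t).re + 2 * (u t).im ^ 1 * (f t).im) t :=
        (hre.pow 2).add (him.pow 2)
      have : g = fun t => (u t).re ^ 2 + (u t).im ^ 2 := funext fun t => hnorm (u t)
      rw [this]
      convert h1 using 1; ring
    have := (hwd t ht).mul hg
    exact this
  have huicc : uIcc a c = Icc a c := uIcc_of_le hac
  have hGint : IntervalIntegrable G' volume a c := (huicc ▸ hG'c).intervalIntegrable
  have hftc : ∫ t in a..c, G' t = w c * g c - w a * g a := by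
    apply integral_eq_sub_of_hasDerivAt_of_le hac (hw.mul hgc) hGd hGint
  have hptwise : ∀ t ∈ Icc a c, G' t ≤ ‖f t‖ ^ 2 + (W t + (w t) ^ 2) * g t := by
    intro t _
    have h1 := sq_nonneg ((f t).re - w t * (u t).re)
    have h2 := sq_nonneg ((f t).im - w t * (u t).im)
    have e1 : ‖f t‖ ^ 2 = (f t).re ^ 2 + (f t).im ^ 2 := hnorm _
    have e2 : g t = (u t).re ^ 2 + (u t).im ^ 2 := hnorm _
    rw [hG'_def]; simp only []
    rw [e1, e2]
    nlinarith [h1, h2]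
  have hfint : IntervalIntegrable (fun t => ‖f t‖ ^ 2) volume a c :=
    (huicc ▸ (hf.norm.pow 2)).intervalIntegrable
  have hWgint : IntervalIntegrable (fun t => (W t + (w t) ^ 2) * g t) volume a c :=
    (huicc ▸ ((hW.add (hw.pow 2)).mul hgc)).intervalIntegrable
  have hmono : ∫ t in a..c, G' t ≤ ∫ t in a..c, (‖f t‖ ^ 2 + (W t + (w t) ^ 2) * g t) :=
    integral_mono_on hac hGint (hfint.add hWgint) hptwise
  rw [integral_add hfint hWgint] at hmono
  rw [hftc] at hmono
  simp only [hg_def] at hmono ⊢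
  linarith

theorem two_sided_robin_hardy (b σ₁ σ₂ : ℝ) (hb : 0 < b) (hσ₁ : 0 < σ₁) (hσ₂ : 0 < σ₂)
    (u : ℝ → ℂ) (hu : ContDiffOn ℝ 1 u (Set.Icc 0 b)) :
    (∫ t in (0:ℝ)..b, ‖deriv u t‖ ^ 2) + σ₁ * ‖u 0‖ ^ 2 + σ₂ * ‖u b‖ ^ 2 ≥
      (1 / 4) * (∫ t in (0:ℝ)..(b / 2), ((t + 1 / (2 * σ₁)) ^ 2)⁻¹ * ‖u t‖ ^ 2)
        + (1 / 4) * ∫ t in (b / 2)..b, ((b - t + 1 / (2 * σ₂)) ^ 2)⁻¹ * ‖u t‖ ^ 2 := by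
  set f := derivWithin u (Set.Icc 0 b) with hf_def
  have huc : ContinuousOn u (Icc 0 b) := hu.continuousOn
  have hfc : ContinuousOn f (Icc 0 b) :=
    hu.continuousOn_derivWithin (uniqueDiffOn_Icc hb) le_rfl
  have hudiff : DifferentiableOn ℝ u (Icc 0 b) := hu.differentiableOn one_ne_zero
  have hud : ∀ t ∈ Ioo 0 b, HasDerivAt u (f t) t := fun t ht =>
    ((hudiff t (Ioo_subset_Icc_self ht)).hasDerivWithinAt).hasDerivAt
      (Icc_mem_nhds ht.1 ht.2)
  set c₁ := 1 / (2 * σ₁) with hc₁def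
  set c₂ := 1 / (2 * σ₂) with hc₂def
  have hc₁ : 0 < c₁ := by positivity
  have hc₂ : 0 < c₂ := by positivity
  have hb2 : (0:ℝ) ≤ b / 2 := by linarith
  have hb2b : b / 2 ≤ b := by linarith
  have hsub1 : Icc (0:ℝ) (b/2) ⊆ Icc 0 b := Icc_subset_Icc le_rfl hb2b
  have hsub2 : Icc (b/2) b ⊆ Icc 0 b := Icc_subset_Icc hb2 le_rfl
  -- left piece
  set w₁ : ℝ → ℝ := fun t => (1/2) * (t + c₁)⁻¹ with hw₁def
  set W₁ : ℝ → ℝ := fun t => -(1/2) * ((t + c₁) ^ 2)⁻¹ with hW₁def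
  have hne₁ : ∀ t ∈ Icc (0:ℝ) (b/2), t + c₁ ≠ 0 := by
    intro t ht; have := ht.1; positivity
  have hw₁c : ContinuousOn w₁ (Icc 0 (b/2)) :=
    continuousOn_const.mul (((continuous_id.add continuous_const).continuousOn).inv₀ hne₁)
  have hW₁c : ContinuousOn W₁ (Icc 0 (b/2)) := by
    apply continuousOn_const.mul
    exact (((continuous_id.add continuous_const).pow 2).continuousOn).inv₀
      (fun t ht => pow_ne_zero 2 (hne₁ t ht))
  have hwd₁ : ∀ t ∈ Ioo (0:ℝ) (b/2), HasDerivAt w₁ (W₁ t) t := by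
    intro t ht
    have hne : t + c₁ ≠ 0 := hne₁ t ⟨le_of_lt ht.1, le_of_lt ht.2⟩
    have h := (((hasDerivAt_id t).add_const c₁).inv hne).const_mul (1/2:ℝ)
    refine h.congr_deriv ?_
    simp only [hW₁def, id]
    field_simp
  have key₁ := robin_key 0 (b/2) hb2 u f w₁ W₁ (huc.mono hsub1) (hfc.mono hsub1)
    hw₁c hW₁c (fun t ht => hud t ⟨ht.1, lt_of_lt_of_le ht.2 hb2b⟩) hwd₁
  have eqint₁ : (∫ t in (0:ℝ)..(b/2), (W₁ t + (w₁ t) ^ 2) * ‖u t‖ ^ 2)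
      = -(1/4) * ∫ t in (0:ℝ)..(b/2), ((t + c₁) ^ 2)⁻¹ * ‖u t‖ ^ 2 := by
    rw [← intervalIntegral.integral_const_mul]
    apply integral_congr
    intro t ht
    rw [uIcc_of_le hb2] at ht
    have hne : t + c₁ ≠ 0 := hne₁ t ht
    show (W₁ t + (w₁ t) ^ 2) * ‖u t‖ ^ 2 = -(1/4) * (((t + c₁) ^ 2)⁻¹ * ‖u t‖ ^ 2)
    simp only [hW₁def, hw₁def]
    field_simp
    ring
  have hw₁0 : w₁ 0 = σ₁ := by
    rw [hw₁def, hc₁def]; field_simp; ring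
  have hw₁b2 : 0 ≤ w₁ (b/2) * ‖u (b/2)‖ ^ 2 := by
    have : (0:ℝ) ≤ (b/2 + c₁)⁻¹ := by positivity
    rw [hw₁def]; positivity
  -- right piece
  set w₂ : ℝ → ℝ := fun t => -(1/2) * (b - t + c₂)⁻¹ with hw₂def
  set W₂ : ℝ → ℝ := fun t => -(1/2) * ((b - t + c₂) ^ 2)⁻¹ with hW₂def
  have hne₂ : ∀ t ∈ Icc (b/2) b, b - t + c₂ ≠ 0 := by
    intro t ht; have h1 : 0 ≤ b - t := by linarith [ht.2]
    positivity
  have hw₂c : ContinuousOn w₂ (Icc (b/2) b) :=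
    continuousOn_const.mul ((((continuous_const.sub continuous_id).add continuous_const).continuousOn).inv₀ hne₂)
  have hW₂c : ContinuousOn W₂ (Icc (b/2) b) := by
    apply continuousOn_const.mul
    exact ((((continuous_const.sub continuous_id).add continuous_const).pow 2).continuousOn).inv₀
      (fun t ht => pow_ne_zero 2 (hne₂ t ht))
  have hwd₂ : ∀ t ∈ Ioo (b/2) b, HasDerivAt w₂ (W₂ t) t := by
    intro t ht
    have hne : b - t + c₂ ≠ 0 := hne₂ t ⟨le_of_lt ht.1, le_of_lt ht.2⟩
    have h0 : HasDerivAt (fun t : ℝ => b - t + c₂) (-1) t :=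
      ((hasDerivAt_id t).const_sub b).add_const c₂
    have h := (h0.inv hne).const_mul (-(1/2) : ℝ)
    refine h.congr_deriv ?_
    simp only [hW₂def]
    field_simp
  have key₂ := robin_key (b/2) b hb2b u f w₂ W₂ (huc.mono hsub2) (hfc.mono hsub2)
    hw₂c hW₂c (fun t ht => hud t ⟨lt_of_le_of_lt hb2 ht.1, ht.2⟩) hwd₂
  have eqint₂ : (∫ t in (b/2)..b, (W₂ t + (w₂ t) ^ 2) * ‖u t‖ ^ 2)
      = -(1/4) * ∫ t in (b/2)..b, ((b - t + c₂) ^ 2)⁻¹ * ‖u t‖ ^ 2 := by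
    rw [← intervalIntegral.integral_const_mul]
    apply integral_congr
    intro t ht
    rw [uIcc_of_le hb2b] at ht
    have hne : b - t + c₂ ≠ 0 := hne₂ t ht
    show (W₂ t + (w₂ t) ^ 2) * ‖u t‖ ^ 2 = -(1/4) * (((b - t + c₂) ^ 2)⁻¹ * ‖u t‖ ^ 2)
    simp only [hW₂def, hw₂def]
    field_simp
    ring
  have hw₂b : w₂ b = -σ₂ := by
    rw [hw₂def, hc₂def]; field_simp; ring
  have hw₂b2 : w₂ (b/2) * ‖u (b/2)‖ ^ 2 ≤ 0 := by
    have h1 : (0:ℝ) ≤ (b - b/2 + c₂)⁻¹ := by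
      have : 0 ≤ b - b/2 := by linarith
      positivity
    have : w₂ (b/2) ≤ 0 := by rw [hw₂def]; simp only []; nlinarith
    exact mul_nonpos_of_nonpos_of_nonneg this (by positivity)
  -- splitting the full integral
  have h1int : IntervalIntegrable (fun t => ‖f t‖ ^ 2) volume 0 (b/2) :=
    (uIcc_of_le hb2 ▸ ((hfc.mono hsub1).norm.pow 2)).intervalIntegrable
  have h2int : IntervalIntegrable (fun t => ‖f t‖ ^ 2) volume (b/2) b :=
    (uIcc_of_le hb2b ▸ ((hfc.mono hsub2).norm.pow 2)).intervalIntegrable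
  have hIeq : (∫ t in (0:ℝ)..b, ‖deriv u t‖ ^ 2)
      = (∫ t in (0:ℝ)..(b/2), ‖f t‖ ^ 2) + ∫ t in (b/2)..b, ‖f t‖ ^ 2 := by
    rw [integral_add_adjacent_intervals h1int h2int]
    apply intervalIntegral.integral_congr_ae
    have hbne : ∀ᵐ t : ℝ ∂volume, t ≠ b := by
      rw [MeasureTheory.ae_iff]
      have : {t : ℝ | ¬ t ≠ b} = {b} := by ext t; simp
      rw [this]; exact measure_singleton b
    filter_upwards [hbne] with t htb hmem
    rw [uIoc_of_le (le_of_lt hb)] at hmem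
    have htlt : t < b := lt_of_le_of_ne hmem.2 htb
    rw [hf_def, derivWithin_of_mem_nhds (Icc_mem_nhds hmem.1 htlt)]
  rw [hIeq]
  rw [eqint₁] at key₁
  rw [eqint₂] at key₂
  rw [hw₁0] at key₁
  rw [hw₂b] at key₂
  linarith [key₁, key₂, hw₁b2, hw₂b2]
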